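/- Let P ⊆ ℝ^d be a polytope whose vertices are labelled v_1, …, v_V so that, for a nonzero a ∈ ℝ^d, the gaps Δ_j = a·(v_j − v_1) satisfy 0 = Δ_1 < Δ_2 < ⋯ < Δ_V. Let D be the diameter of P, ‖P‖ = max{‖x − y_1‖ : x ∈ P}, α ≥ 3 and β = 1/3 − 1/α. Let a_1, …, a_n ∈ ℝ^d with ε_{n+1} = (1/√n)·Σ_{i=1}^n (a − a_i), and let x_{n+1} = P_P(y_1 − η·(a_1 + ⋯ + a_n)/√n) for a parameter η > 0. If, for some j ∈ {2, …, V}, n > (α‖P‖/(η‖a‖))²·(1 + D²‖a‖²/Δ_j²) and ‖ε_{n+1}‖ < β·√n·‖a‖·(1 + D²‖a‖²/Δ_j²)^{−1/2}, then a·(x_{n+1} − v_1) ≤ Δ_{j−1}. -/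

import Mathlib

set_option maxHeartbeats 1000000


open Finset
open scoped RealInnerProductSpace

/-- `IsProjOn X p q` says that `q` is the Euclidean nearest-point projection of `p`
onto the set `X`. -/
def IsProjOn {d : ℕ} (X : Set (EuclideanSpace ℝ (Fin d)))
    (p q : EuclideanSpace ℝ (Fin d)) : Prop :=
  q ∈ X ∧ ∀ z ∈ X, ‖p - q‖ ≤ ‖p - z‖

lemma isProjOn_inner_le {d : ℕ} (P : Set (EuclideanSpace ℝ (Fin d))) (hconv : Convex ℝ P)
    (p x' : EuclideanSpace ℝ (Fin d)) (h1 : x' ∈ P)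
    (h2 : ∀ z ∈ P, ‖p - x'‖ ≤ ‖p - z‖) : ∀ zz ∈ P, ⟪p - x', zz - x'⟫ ≤ 0 := by
  have hne : Nonempty ↥P := ⟨⟨x', h1⟩⟩
  have hbdd : BddBelow (Set.range fun w : P => ‖p - (w : EuclideanSpace ℝ (Fin d))‖) := by
    refine ⟨0, ?_⟩
    rintro r ⟨w, rfl⟩
    exact norm_nonneg _
  have hmin : ‖p - x'‖ = ⨅ w : P, ‖p - (w : EuclideanSpace ℝ (Fin d))‖ := by
    apply le_antisymm
    · exact le_ciInf fun w => h2 w w.2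
    · exact ciInf_le hbdd ⟨x', h1⟩
  exact (norm_eq_iInf_iff_real_inner_le_zero hconv h1).mp hmin

/-- Lemma 12: if `n` is large and the error term is small, then the action `x_{n+1}`
has pseudo-regret at most `Δ_{j-1}`. -/
theorem large_n_small_error_regret_gap {d : ℕ}
    (V : ℕ) (hV : 1 ≤ V)
    (v : ℕ → EuclideanSpace ℝ (Fin d))
    (P : Set (EuclideanSpace ℝ (Fin d)))
    (hP : P = convexHull ℝ (v '' Set.Icc 1 V))
    (a : EuclideanSpace ℝ (Fin d)) (ha : a ≠ 0)
    (hmono : ∀ i j, 1 ≤ i → i < j → j ≤ V → ⟪a, v i - v 1⟫ < ⟪a, v j - v 1⟫)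
    (y1 : EuclideanSpace ℝ (Fin d))
    (D K : ℝ)
    (hD : IsGreatest {r : ℝ | ∃ x ∈ P, ∃ y ∈ P, r = ‖x - y‖} D)
    (hK : IsGreatest {r : ℝ | ∃ x ∈ P, r = ‖x - y1‖} K)
    (α : ℝ) (hα : 3 ≤ α)
    (η : ℝ) (hη : 0 < η)
    (n : ℕ) (A : ℕ → EuclideanSpace ℝ (Fin d))
    (x' : EuclideanSpace ℝ (Fin d))
    (hx' : IsProjOn P (y1 - (η / Real.sqrt n) • ∑ i ∈ Icc 1 n, A i) x')
    (j : ℕ) (hj2 : 2 ≤ j) (hjV : j ≤ V)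
    (hn : (α * K / (η * ‖a‖)) ^ 2 * (1 + D ^ 2 * ‖a‖ ^ 2 / ⟪a, v j - v 1⟫ ^ 2) < (n : ℝ))
    (hε : ‖(Real.sqrt n)⁻¹ • ∑ i ∈ Icc 1 n, (a - A i)‖ <
      (1 / 3 - 1 / α) * Real.sqrt n * ‖a‖ *
        (1 + D ^ 2 * ‖a‖ ^ 2 / ⟪a, v j - v 1⟫ ^ 2) ^ (-(1 : ℝ) / 2)) :
    ⟪a, x' - v 1⟫ ≤ ⟪a, v (j - 1) - v 1⟫ := by
  
  classical
  set sn := Real.sqrt n with hsn_def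
  set ε : EuclideanSpace ℝ (Fin d) := (sn)⁻¹ • ∑ i ∈ Icc 1 n, (a - A i) with hε_def
  set Δj : ℝ := ⟪a, v j - v 1⟫ with hΔj_def
  set Δj' : ℝ := ⟪a, v (j-1) - v 1⟫ with hΔj'_def
  have hna : (0:ℝ) < ‖a‖ := norm_pos_iff.mpr ha
  have hvP : ∀ k, 1 ≤ k → k ≤ V → v k ∈ P := by
    intro k h1 h2
    rw [hP]
    exact subset_convexHull ℝ _ ⟨k, ⟨h1, h2⟩, rfl⟩
  have hv1P : v 1 ∈ P := hvP 1 le_rfl hV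
  have hΔj_pos : 0 < Δj := by
    have := hmono 1 j le_rfl (by omega) hjV
    simpa using this
  have hΔj'_nonneg : 0 ≤ Δj' := by
    rcases eq_or_lt_of_le (show (1:ℕ) ≤ j - 1 by omega) with h | h
    · simp [hΔj'_def, ← h]
    · have := hmono 1 (j-1) le_rfl h (by omega)
      simp only [sub_self, inner_zero_right] at this
      exact this.le
  have hD0 : 0 ≤ D := by
    obtain ⟨x, -, y, -, hr⟩ := hD.1
    rw [hr]; positivity
  have hK0 : 0 ≤ K := by
    obtain ⟨x, -, hr⟩ := hK.1
    rw [hr]; positivity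
  have hn0 : (0:ℝ) < n := lt_of_le_of_lt (by positivity) hn
  have hsn : 0 < sn := Real.sqrt_pos.mpr hn0
  have hsn2 : sn * sn = n := Real.mul_self_sqrt (by positivity)
  set c : ℝ := D ^ 2 * ‖a‖ ^ 2 / Δj ^ 2 with hc_def
  have hc0 : 0 ≤ c := by positivity
  set E : ℝ := ‖ε‖ with hE_def
  have hE0 : 0 ≤ E := norm_nonneg _
  have hαpos : (0:ℝ) < α := by linarith
  -- numeric inequality
  have hnum : (K + η * E) * D < η * sn * Δj := by
    have hsqrtc : Real.sqrt c = D * ‖a‖ / Δj := by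
      have hcc : c = (D * ‖a‖ / Δj) ^ 2 := by rw [hc_def]; ring
      rw [hcc, Real.sqrt_sq (by positivity)]
    have hX0 : 0 ≤ α * K / (η * ‖a‖) := by positivity
    have h1 : α * K / (η * ‖a‖) * Real.sqrt (1 + c) < sn := by
      have h := Real.sqrt_lt_sqrt (by positivity) hn
      rwa [Real.sqrt_mul (sq_nonneg _), Real.sqrt_sq hX0] at h
    have hs1c : D * ‖a‖ / Δj ≤ Real.sqrt (1 + c) := by
      rw [← hsqrtc]
      exact Real.sqrt_le_sqrt (by linarith)
    have hKD : α * K * D < η * sn * Δj := by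
      have h2 : α * K / (η * ‖a‖) * (D * ‖a‖ / Δj) ≤ α * K / (η * ‖a‖) * Real.sqrt (1 + c) :=
        mul_le_mul_of_nonneg_left hs1c hX0
      have h3 : α * K / (η * ‖a‖) * (D * ‖a‖ / Δj) < sn := lt_of_le_of_lt h2 h1
      have h4 : α * K / (η * ‖a‖) * (D * ‖a‖ / Δj) = α * K * D / (η * Δj) := by
        field_simp
      rw [h4, div_lt_iff₀ (by positivity)] at h3
      nlinarith
    have hεD : η * E * D ≤ (1/3 - 1/α) * (η * sn * Δj) := by
      have hβ : (0:ℝ) ≤ 1/3 - 1/α := by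
        have h5 : 1/α ≤ 1/3 := by
          rw [div_le_div_iff₀ hαpos (by norm_num)]
          linarith
        linarith
      rcases eq_or_lt_of_le hD0 with hD' | hD'
      · rw [← hD']
        have : (0:ℝ) ≤ (1/3 - 1/α) * (η * sn * Δj) := by positivity
        linarith
      · have hrpow : (1 + c) ^ (-(1:ℝ)/2) = (Real.sqrt (1 + c))⁻¹ := by
          rw [show (-(1:ℝ)/2) = -(1/2) by ring, Real.rpow_neg (by linarith),
            ← Real.sqrt_eq_rpow]
        have hs1c' : (0:ℝ) < D * ‖a‖ / Δj := by positivity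
        have hinv : (Real.sqrt (1+c))⁻¹ ≤ (D * ‖a‖ / Δj)⁻¹ :=
          inv_anti₀ hs1c' hs1c
        have hE1 : E < (1/3 - 1/α) * sn * ‖a‖ * (D * ‖a‖ / Δj)⁻¹ := by
          rw [hrpow] at hε
          calc E < (1/3 - 1/α) * sn * ‖a‖ * (Real.sqrt (1+c))⁻¹ := hε
          _ ≤ (1/3 - 1/α) * sn * ‖a‖ * (D * ‖a‖ / Δj)⁻¹ :=
              mul_le_mul_of_nonneg_left hinv (by positivity)
        have heq : (1/3 - 1/α) * sn * ‖a‖ * (D * ‖a‖ / Δj)⁻¹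
            = ((1/3 - 1/α) * sn * Δj) / D := by
          field_simp
        rw [heq, lt_div_iff₀ hD'] at hE1
        have h6 := mul_le_mul_of_nonneg_left hE1.le hη.le
        nlinarith [h6]
    have h6 : α * (η*E*D) ≤ (α/3 - 1) * (η*sn*Δj) := by
      have h7 := mul_le_mul_of_nonneg_left hεD hαpos.le
      have heq2 : α * ((1/3 - 1/α)*(η*sn*Δj)) = (α/3 - 1) * (η*sn*Δj) := by
        field_simp
      linarith [heq2.le, heq2.ge]
    have hpos : 0 < η * sn * Δj := by positivity
    have h7 : α * ((K + η*E)*D) < α * (η*sn*Δj) := by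
      nlinarith [hKD, h6, mul_nonneg hαpos.le hpos.le]
    exact lt_of_mul_lt_mul_left h7 hαpos.le
  -- projection characterization
  have hconv : Convex ℝ P := by rw [hP]; exact convex_convexHull ℝ _
  set p : EuclideanSpace ℝ (Fin d) := y1 - (η / sn) • ∑ i ∈ Icc 1 n, A i with hp_def
  have hproj : ∀ zz ∈ P, ⟪p - x', zz - x'⟫ ≤ 0 :=
    isProjOn_inner_le P hconv p x' hx'.1 hx'.2
  -- rewrite p - x'
  have hsum : ∑ i ∈ Icc 1 n, (a - A i) = (n:ℝ) • a - ∑ i ∈ Icc 1 n, A i := by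
    rw [Finset.sum_sub_distrib, Finset.sum_const, Nat.card_Icc]
    simp [Nat.cast_smul_eq_nsmul]
  have hεsn : sn • ε = (n:ℝ) • a - ∑ i ∈ Icc 1 n, A i := by
    rw [hε_def, smul_smul, mul_inv_cancel₀ hsn.ne', one_smul, hsum]
  have hA : ∑ i ∈ Icc 1 n, A i = (sn * sn) • a - sn • ε := by
    rw [hεsn, hsn2]; abel
  have hkey : (η / sn) • ∑ i ∈ Icc 1 n, A i = (η * sn) • a - η • ε := by
    rw [hA, smul_sub, smul_smul, smul_smul]
    have e1 : η/sn*(sn*sn) = η*sn := by field_simp [hsn.ne']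
    have e2 : η/sn*sn = η := by field_simp [hsn.ne']
    rw [e1, e2]
  have hpx : p - x' = (y1 - x') - (η * sn) • a + η • ε := by
    rw [hp_def, hkey]; abel
  -- convex decomposition of x'
  have hx'P : x' ∈ convexHull ℝ (v '' Set.Icc 1 V) := hP ▸ hx'.1
  rw [_root_.convexHull_eq] at hx'P
  obtain ⟨ι, t, w, z, hw0, hw1, hz, hxz⟩ := hx'P
  have hx'sum : x' = ∑ i ∈ t, w i • z i := by
    rw [← hxz, Finset.centerMass_eq_of_sum_1 _ _ hw1]
  set pr : ι → Prop := fun i => Δj ≤ ⟪a, z i - v 1⟫ with hpr_def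
  set t₂ : Finset ι := t.filter pr with ht₂_def
  set t₁ : Finset ι := t.filter (fun i => ¬ pr i) with ht₁_def
  set lam : ℝ := ∑ i ∈ t₂, w i with hlam_def
  set u : EuclideanSpace ℝ (Fin d) := ∑ i ∈ t₂, w i • (z i - v 1) with hu_def
  have ht₂sub : t₂ ⊆ t := Finset.filter_subset _ _
  have ht₁sub : t₁ ⊆ t := Finset.filter_subset _ _
  have hzP : ∀ i ∈ t, z i ∈ P := fun i hi => hP ▸ subset_convexHull ℝ _ (hz i hi)
  have hyeq : x' - u = ∑ i ∈ t, w i • (if pr i then v 1 else z i) := by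
    rw [hx'sum, hu_def, ht₂_def, Finset.sum_filter, ← Finset.sum_sub_distrib]
    apply Finset.sum_congr rfl
    intro i hi
    by_cases h : pr i
    · simp only [if_pos h, if_pos (show Δj ≤ ⟪a, z i - v 1⟫ from h), smul_sub]; abel
    · simp only [if_neg h, if_neg (show ¬ Δj ≤ ⟪a, z i - v 1⟫ from h), sub_zero]
  have huP : x' - u ∈ P := by
    rw [hP, hyeq]
    have hz'' : ∀ i ∈ t, (if pr i then v 1 else z i) ∈ v '' Set.Icc 1 V := by
      intro i hi
      by_cases h : pr i
      · simp only [if_pos h]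
        exact ⟨1, ⟨le_rfl, hV⟩, rfl⟩
      · simp only [if_neg h]
        exact hz i hi
    have hm := Finset.centerMass_mem_convexHull t hw0 (by rw [hw1]; norm_num) hz''
    rwa [Finset.centerMass_eq_of_sum_1 _ _ hw1] at hm
  set S : ℝ := ⟪a, u⟫ with hS_def
  have hinner : 0 ≤ ⟪y1 - x', u⟫ - (η*sn) * S + η * ⟪ε, u⟫ := by
    have h := hproj (x' - u) huP
    rw [show (x' - u) - x' = -u by abel, hpx, inner_neg_right] at h
    have h' : (0:ℝ) ≤ ⟪(y1 - x') - (η * sn) • a + η • ε, u⟫ := by linarith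
    rwa [inner_add_left, inner_sub_left, real_inner_smul_left, real_inner_smul_left] at h'
  have hSsum : S = ∑ i ∈ t₂, w i * ⟪a, z i - v 1⟫ := by
    rw [hS_def, hu_def, inner_sum]
    exact Finset.sum_congr rfl fun i _ => real_inner_smul_right _ _ _
  have hlam_le : lam * Δj ≤ S := by
    rw [hSsum, hlam_def, Finset.sum_mul]
    refine Finset.sum_le_sum fun i hi => ?_
    exact mul_le_mul_of_nonneg_left (Finset.mem_filter.mp hi).2 (hw0 i (ht₂sub hi))
  have hu_norm : ‖u‖ ≤ lam * D := by
    calc ‖u‖ ≤ ∑ i ∈ t₂, ‖w i • (z i - v 1)‖ := norm_sum_le _ _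
    _ ≤ ∑ i ∈ t₂, w i * D := by
        refine Finset.sum_le_sum fun i hi => ?_
        rw [norm_smul, Real.norm_eq_abs, abs_of_nonneg (hw0 i (ht₂sub hi))]
        exact mul_le_mul_of_nonneg_left
          (hD.2 ⟨z i, hzP i (ht₂sub hi), v 1, hv1P, rfl⟩) (hw0 i (ht₂sub hi))
    _ = lam * D := by rw [hlam_def, Finset.sum_mul]
  have hx'K : ‖y1 - x'‖ ≤ K := by
    rw [norm_sub_rev]; exact hK.2 ⟨x', hx'.1, rfl⟩
  have hS_le : η * sn * S ≤ (K + η * E) * ‖u‖ := by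
    have h1 : ⟪y1 - x', u⟫ ≤ K * ‖u‖ :=
      le_trans (real_inner_le_norm _ _) (mul_le_mul_of_nonneg_right hx'K (norm_nonneg _))
    have h2 : ⟪ε, u⟫ ≤ E * ‖u‖ := real_inner_le_norm _ _
    nlinarith [mul_le_mul_of_nonneg_left h2 hη.le, hinner, h1]
  have hS_nonpos : S ≤ 0 := by
    by_contra hSpos
    push_neg at hSpos
    have hKE : (0:ℝ) ≤ K + η * E := by positivity
    have h3 : η * sn * S ≤ (K + η * E) * (lam * D) :=
      le_trans hS_le (mul_le_mul_of_nonneg_left hu_norm hKE)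
    have h4 : (K + η * E) * (D * (lam * Δj)) ≤ (K + η * E) * (D * S) :=
      mul_le_mul_of_nonneg_left (mul_le_mul_of_nonneg_left hlam_le hD0) hKE
    have h5 : (K + η * E) * D * S < η * sn * Δj * S :=
      mul_lt_mul_of_pos_right hnum hSpos
    have h3' := mul_le_mul_of_nonneg_right h3 hΔj_pos.le
    linarith only [h3', h4, h5]
  have hclaimA : ∀ i ∈ t₁, ⟪a, z i - v 1⟫ ≤ Δj' := by
    intro i hi
    have hit : i ∈ t := ht₁sub hi
    have hnp : ¬ pr i := (Finset.mem_filter.mp hi).2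
    simp only [hpr_def, not_le] at hnp
    obtain ⟨k, ⟨hk1, hkV⟩, hzk⟩ := hz i hit
    rw [← hzk] at hnp ⊢
    rcases lt_or_ge k j with hkj | hjk
    · rcases eq_or_lt_of_le (show k ≤ j - 1 by omega) with he | hl
      · rw [hΔj'_def, he]
      · exact (hmono k (j-1) hk1 hl (by omega)).le
    · exfalso
      rcases eq_or_lt_of_le hjk with he | hl
      · rw [hΔj_def, he] at hnp
        exact lt_irrefl _ hnp
      · exact absurd hnp (not_lt.mpr (hmono j k (by omega) hl hkV).le)
  have hxv : ⟪a, x' - v 1⟫ = ∑ i ∈ t, w i * ⟪a, z i - v 1⟫ := by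
    have hx'v : x' - v 1 = ∑ i ∈ t, w i • (z i - v 1) := by
      rw [hx'sum]
      simp [smul_sub, Finset.sum_sub_distrib, ← Finset.sum_smul, hw1]
    rw [hx'v, inner_sum]
    exact Finset.sum_congr rfl fun i _ => real_inner_smul_right _ _ _
  have hsplit : ∑ i ∈ t, w i * ⟪a, z i - v 1⟫
      = S + ∑ i ∈ t₁, w i * ⟪a, z i - v 1⟫ := by
    rw [hSsum, ht₂_def, ht₁_def, Finset.sum_filter_add_sum_filter_not]
  have hlam0 : 0 ≤ lam := Finset.sum_nonneg fun i hi => hw0 i (ht₂sub hi)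
  have ht₁sum : ∑ i ∈ t₁, w i ≤ 1 := by
    have hsplitw : lam + ∑ i ∈ t₁, w i = 1 := by
      rw [hlam_def, ht₂_def, ht₁_def, Finset.sum_filter_add_sum_filter_not, hw1]
    linarith
  have h1 : ∑ i ∈ t₁, w i * ⟪a, z i - v 1⟫ ≤ Δj' := by
    calc ∑ i ∈ t₁, w i * ⟪a, z i - v 1⟫ ≤ ∑ i ∈ t₁, w i * Δj' :=
        Finset.sum_le_sum fun i hi =>
          mul_le_mul_of_nonneg_left (hclaimA i hi) (hw0 i (ht₁sub hi))
    _ = (∑ i ∈ t₁, w i) * Δj' := (Finset.sum_mul _ _ _).symm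
    _ ≤ 1 * Δj' := mul_le_mul_of_nonneg_right ht₁sum hΔj'_nonneg
    _ = Δj' := one_mul _
  rw [hxv, hsplit]
  linarith only [hS_nonpos, h1]
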